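/- Let P be a finite collection of cells of ℕ² contained in the interval [(1,1),(m,n)], let S be its associated polynomial ring over a field K, let I_P ⊆ S be the ideal generated by the inner 2-minors of P, and let I_Λ be the lattice ideal of the lattice Λ generated by the vectors c_1,…,c_r attached to the cells of P. Then there exists a monomial u ∈ S such that I_Λ = (I_P : u). -/

import Mathlib

namespace PolyominoPaper

open MvPolynomial

/-- A point of `ℕ²`.  A cell is identified with its lower left corner. -/
abbrev Pt : Type := ℕ × ℕ

/-- The four vertices of the unit cell with lower left corner `c`. -/
def cellVerts (c : Pt) : Finset Pt :=
  {c, (c.1 + 1, c.2), (c.1, c.2 + 1), (c.1 + 1, c.2 + 1)}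

/-- The vertex set `V(P)` of a finite collection of cells `P`. -/
def vertexSet (P : Finset Pt) : Finset Pt := P.biUnion cellVerts

/-- Two cells share an edge. -/
def CellAdj (c d : Pt) : Prop :=
  (c.1 = d.1 ∧ (c.2 + 1 = d.2 ∨ d.2 + 1 = c.2)) ∨
  (c.2 = d.2 ∧ (c.1 + 1 = d.1 ∨ d.1 + 1 = c.1))

/-- A polyomino: a nonempty finite collection of cells, any two of which are
connected through a sequence of edge-adjacent cells of `P`. -/
def IsPolyomino (P : Finset Pt) : Prop :=
  P.Nonempty ∧ ∀ c ∈ P, ∀ d ∈ P,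
    Relation.ReflTransGen (fun x y => y ∈ P ∧ CellAdj x y) c d

/-- `[a,b]` is an inner interval of `P`: it is a proper interval and all its
cells belong to `P` (cells are given by their lower left corners `e`). -/
def IsInnerInterval (P : Finset Pt) (a b : Pt) : Prop :=
  a.1 < b.1 ∧ a.2 < b.2 ∧
    ∀ e : Pt, a.1 ≤ e.1 → e.1 < b.1 → a.2 ≤ e.2 → e.2 < b.2 → e ∈ P

/-- A collection of cells is thin if it does not contain the four cells of a
`2 × 2` square. -/
def IsThin (P : Finset Pt) : Prop :=
  ¬ ∃ w : Pt, w ∈ P ∧ (w.1 + 1, w.2) ∈ P ∧ (w.1, w.2 + 1) ∈ P ∧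
      (w.1 + 1, w.2 + 1) ∈ P

/-- A maximal inner interval of `P`: an inner interval not properly contained
in another inner interval of `P`. -/
def IsMaxInnerInterval (P : Finset Pt) (a b : Pt) : Prop :=
  IsInnerInterval P a b ∧
    ∀ a' b' : Pt, IsInnerInterval P a' b' →
      a'.1 ≤ a.1 → a'.2 ≤ a.2 → b.1 ≤ b'.1 → b.2 ≤ b'.2 → a = a' ∧ b = b'

/-- The inner 2-minor `x_a x_b - x_c x_d` attached to the interval `[a,b]`,
where `c, d` are the anti-diagonal corners of `[a,b]`. -/
noncomputable def innerMinor (K : Type*) [Field K] (a b : Pt) :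
    MvPolynomial Pt K :=
  X a * X b - X (a.1, b.2) * X (b.1, a.2)

/-- The set `M` of inner 2-minors of `P`. -/
def innerMinors (K : Type*) [Field K] (P : Finset Pt) :
    Set (MvPolynomial Pt K) :=
  {f | ∃ a b : Pt, IsInnerInterval P a b ∧ f = innerMinor K a b}

/-- The polyomino ideal `I_P`, generated by the inner 2-minors of `P`. -/
noncomputable def polyIdeal (K : Type*) [Field K] (P : Finset Pt) :
    Ideal (MvPolynomial Pt K) :=
  Ideal.span (innerMinors K P)

/-- Total degree of a monomial (exponent vector). -/
def mdeg (m : Pt →₀ ℕ) : ℕ := m.sum fun _ e => e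

/-- The graded reverse lexicographic (strict) order on monomials induced by a
total order `vlt` on the variables (`vlt a b` meaning `a` is smaller than `b`):
`m₁ < m₂` iff `deg m₁ < deg m₂`, or the degrees agree and the smallest
variable in which they differ has a larger exponent in `m₁`. -/
def GrevlexLt (vlt : Pt → Pt → Prop) (m₁ m₂ : Pt →₀ ℕ) : Prop :=
  mdeg m₁ < mdeg m₂ ∨
    (mdeg m₁ = mdeg m₂ ∧ ∃ v : Pt, m₂ v < m₁ v ∧ ∀ w : Pt, vlt w v → m₁ w = m₂ w)

/-- `m` is the leading monomial of `f` with respect to the strict monomial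
order `mlt`. -/
def IsLeadMon {K : Type*} [Field K] (mlt : (Pt →₀ ℕ) → (Pt →₀ ℕ) → Prop)
    (f : MvPolynomial Pt K) (m : Pt →₀ ℕ) : Prop :=
  m ∈ f.support ∧ ∀ m' ∈ f.support, m' ≠ m → mlt m' m

/-- The ideal generated by the leading monomials of the members of `F`. -/
noncomputable def lmIdeal {K : Type*} [Field K]
    (mlt : (Pt →₀ ℕ) → (Pt →₀ ℕ) → Prop) (F : Set (MvPolynomial Pt K)) :
    Ideal (MvPolynomial Pt K) :=
  Ideal.span {p | ∃ f ∈ F, ∃ m : Pt →₀ ℕ, IsLeadMon mlt f m ∧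
    p = monomial m (1 : K)}

/-- `G` is a Gröbner basis of `I` with respect to the monomial order `mlt`. -/
def IsGroebnerBasis {K : Type*} [Field K]
    (mlt : (Pt →₀ ℕ) → (Pt →₀ ℕ) → Prop) (G : Set (MvPolynomial Pt K))
    (I : Ideal (MvPolynomial Pt K)) : Prop :=
  (∀ g ∈ G, g ∈ I) ∧ lmIdeal mlt G = lmIdeal mlt (I : Set (MvPolynomial Pt K))

/-- `G` is a reduced Gröbner basis of `I` with respect to `mlt`: it is a
Gröbner basis, every element is monic, and no monomial occurring in an element
of `G` is divisible by the leading monomial of a different element of `G`. -/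
def IsReducedGroebnerBasis {K : Type*} [Field K]
    (mlt : (Pt →₀ ℕ) → (Pt →₀ ℕ) → Prop) (G : Set (MvPolynomial Pt K))
    (I : Ideal (MvPolynomial Pt K)) : Prop :=
  IsGroebnerBasis mlt G I ∧
    (∀ g ∈ G, ∀ m : Pt →₀ ℕ, IsLeadMon mlt g m → MvPolynomial.coeff m g = 1) ∧
    (∀ g ∈ G, ∀ g' ∈ G, g' ≠ g → ∀ m ∈ g.support, ∀ m' : Pt →₀ ℕ,
      IsLeadMon mlt g' m' → ¬ m' ≤ m)

/-- The eight total orders `<^1, …, <^8` on the vertices, as in Table 1 of the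
paper; e.g. `a <^1 b` iff `a₁ < b₁` or (`a₁ = b₁` and `a₂ > b₂`), and
`a <^5 b` iff `a₂ < b₂` or (`a₂ = b₂` and `a₁ > b₁`). -/
def vord : ℕ → Pt → Pt → Prop
  | 1 => fun a b => a.1 < b.1 ∨ (a.1 = b.1 ∧ b.2 < a.2)
  | 2 => fun a b => b.1 < a.1 ∨ (a.1 = b.1 ∧ b.2 < a.2)
  | 3 => fun a b => b.1 < a.1 ∨ (a.1 = b.1 ∧ a.2 < b.2)
  | 4 => fun a b => a.1 < b.1 ∨ (a.1 = b.1 ∧ a.2 < b.2)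
  | 5 => fun a b => a.2 < b.2 ∨ (a.2 = b.2 ∧ b.1 < a.1)
  | 6 => fun a b => a.2 < b.2 ∨ (a.2 = b.2 ∧ a.1 < b.1)
  | 7 => fun a b => b.2 < a.2 ∨ (a.2 = b.2 ∧ a.1 < b.1)
  | 8 => fun a b => b.2 < a.2 ∨ (a.2 = b.2 ∧ b.1 < a.1)
  | _ => fun _ _ => False

/-- The cyclic shift of a total order `vlt` making `v` the smallest element:
first come `v` and the elements above `v`, in the old order, then the elements
below `v`, in the old order. -/
def vordShift (vlt : Pt → Pt → Prop) (v : Pt) : Pt → Pt → Prop :=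
  fun a b => (¬ vlt a v ∧ vlt b v) ∨ ((vlt a v ↔ vlt b v) ∧ vlt a b)

/-- The condition `π_k` (for `k = 1, …, 8`) at a vertex `v` of `P`, i.e. one of
the two forbidden configurations (I), (II) of Table 2 of the paper occurs at
`v`; `π₁` is as in Definition 2.2, and `π_k` is obtained from `π₁` by the
symmetry of the plane carrying the order `<^1` to `<^k`. -/
def SatisfiesPi (P : Finset Pt) (k : ℕ) (v : Pt) : Prop :=
  ∃ x₁ x₂ x₃ y₁ y₂ y₃ : ℕ, x₁ < x₂ ∧ x₂ < x₃ ∧ y₁ < y₂ ∧ y₂ < y₃ ∧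
    (match k with
      | 1 =>
        (v = (x₁, y₂) ∧
          IsInnerInterval P (x₁, y₁) (x₂, y₂) ∧
          IsInnerInterval P (x₂, y₂) (x₃, y₃) ∧
          IsInnerInterval P (x₁, y₂) (x₃, y₃) ∧
          ¬ IsInnerInterval P (x₁, y₁) (x₃, y₂)) ∨
        (v = (x₂, y₂) ∧
          IsInnerInterval P (x₁, y₂) (x₂, y₃) ∧
          IsInnerInterval P (x₂, y₁) (x₃, y₂) ∧
          IsInnerInterval P (x₂, y₂) (x₃, y₃) ∧
          ¬ IsInnerInterval P (x₁, y₁) (x₂, y₂))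
      | 2 =>
        (v = (x₃, y₂) ∧
          IsInnerInterval P (x₂, y₁) (x₃, y₂) ∧
          IsInnerInterval P (x₁, y₂) (x₂, y₃) ∧
          IsInnerInterval P (x₁, y₂) (x₃, y₃) ∧
          ¬ IsInnerInterval P (x₁, y₁) (x₃, y₂)) ∨
        (v = (x₂, y₂) ∧
          IsInnerInterval P (x₂, y₂) (x₃, y₃) ∧
          IsInnerInterval P (x₁, y₁) (x₂, y₂) ∧
          IsInnerInterval P (x₁, y₂) (x₂, y₃) ∧
          ¬ IsInnerInterval P (x₂, y₁) (x₃, y₂))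
      | 3 =>
        (v = (x₃, y₂) ∧
          IsInnerInterval P (x₂, y₂) (x₃, y₃) ∧
          IsInnerInterval P (x₁, y₁) (x₂, y₂) ∧
          IsInnerInterval P (x₁, y₁) (x₃, y₂) ∧
          ¬ IsInnerInterval P (x₁, y₂) (x₃, y₃)) ∨
        (v = (x₂, y₂) ∧
          IsInnerInterval P (x₂, y₁) (x₃, y₂) ∧
          IsInnerInterval P (x₁, y₂) (x₂, y₃) ∧
          IsInnerInterval P (x₁, y₁) (x₂, y₂) ∧
          ¬ IsInnerInterval P (x₂, y₂) (x₃, y₃))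
      | 4 =>
        (v = (x₁, y₂) ∧
          IsInnerInterval P (x₁, y₂) (x₂, y₃) ∧
          IsInnerInterval P (x₂, y₁) (x₃, y₂) ∧
          IsInnerInterval P (x₁, y₁) (x₃, y₂) ∧
          ¬ IsInnerInterval P (x₁, y₂) (x₃, y₃)) ∨
        (v = (x₂, y₂) ∧
          IsInnerInterval P (x₁, y₁) (x₂, y₂) ∧
          IsInnerInterval P (x₂, y₂) (x₃, y₃) ∧
          IsInnerInterval P (x₂, y₁) (x₃, y₂) ∧
          ¬ IsInnerInterval P (x₁, y₂) (x₂, y₃))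
      | 5 =>
        (v = (x₂, y₁) ∧
          IsInnerInterval P (x₁, y₁) (x₂, y₂) ∧
          IsInnerInterval P (x₂, y₂) (x₃, y₃) ∧
          IsInnerInterval P (x₂, y₁) (x₃, y₃) ∧
          ¬ IsInnerInterval P (x₁, y₁) (x₂, y₃)) ∨
        (v = (x₂, y₂) ∧
          IsInnerInterval P (x₂, y₁) (x₃, y₂) ∧
          IsInnerInterval P (x₁, y₂) (x₂, y₃) ∧
          IsInnerInterval P (x₂, y₂) (x₃, y₃) ∧
          ¬ IsInnerInterval P (x₁, y₁) (x₂, y₂))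
      | 6 =>
        (v = (x₂, y₃) ∧
          IsInnerInterval P (x₁, y₂) (x₂, y₃) ∧
          IsInnerInterval P (x₂, y₁) (x₃, y₂) ∧
          IsInnerInterval P (x₂, y₁) (x₃, y₃) ∧
          ¬ IsInnerInterval P (x₁, y₁) (x₂, y₃)) ∨
        (v = (x₂, y₂) ∧
          IsInnerInterval P (x₂, y₂) (x₃, y₃) ∧
          IsInnerInterval P (x₁, y₁) (x₂, y₂) ∧
          IsInnerInterval P (x₂, y₁) (x₃, y₂) ∧
          ¬ IsInnerInterval P (x₁, y₂) (x₂, y₃))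
      | 7 =>
        (v = (x₂, y₃) ∧
          IsInnerInterval P (x₂, y₂) (x₃, y₃) ∧
          IsInnerInterval P (x₁, y₁) (x₂, y₂) ∧
          IsInnerInterval P (x₁, y₁) (x₂, y₃) ∧
          ¬ IsInnerInterval P (x₂, y₁) (x₃, y₃)) ∨
        (v = (x₂, y₂) ∧
          IsInnerInterval P (x₁, y₂) (x₂, y₃) ∧
          IsInnerInterval P (x₂, y₁) (x₃, y₂) ∧
          IsInnerInterval P (x₁, y₁) (x₂, y₂) ∧
          ¬ IsInnerInterval P (x₂, y₂) (x₃, y₃))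
      | 8 =>
        (v = (x₂, y₁) ∧
          IsInnerInterval P (x₂, y₁) (x₃, y₂) ∧
          IsInnerInterval P (x₁, y₂) (x₂, y₃) ∧
          IsInnerInterval P (x₁, y₁) (x₂, y₃) ∧
          ¬ IsInnerInterval P (x₂, y₁) (x₃, y₃)) ∨
        (v = (x₂, y₂) ∧
          IsInnerInterval P (x₁, y₁) (x₂, y₂) ∧
          IsInnerInterval P (x₂, y₂) (x₃, y₃) ∧
          IsInnerInterval P (x₁, y₂) (x₂, y₃) ∧
          ¬ IsInnerInterval P (x₂, y₁) (x₃, y₂))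
      | _ => False)

/-- The vector `c_C ∈ ℤ^{V}` attached to the cell with lower left corner `c`. -/
noncomputable def cellVec (c : Pt) : Pt →₀ ℤ :=
  Finsupp.single c 1 + Finsupp.single (c.1 + 1, c.2 + 1) 1
    - Finsupp.single (c.1 + 1, c.2) 1 - Finsupp.single (c.1, c.2 + 1) 1

/-- The lattice `Λ` generated by the vectors attached to the cells of `P`. -/
noncomputable def latticeOf (P : Finset Pt) : AddSubgroup (Pt →₀ ℤ) :=
  AddSubgroup.closure (cellVec '' ↑P)

/-- Positive part of an integer vector, kept with integer values. -/
noncomputable def intPosPart (u : Pt →₀ ℤ) : Pt →₀ ℤ :=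
  Finsupp.mapRange (fun z => max z 0) (by simp) u

/-- Positive part `u⁺` of an integer vector, as an exponent vector. -/
noncomputable def natPosPart (u : Pt →₀ ℤ) : Pt →₀ ℕ :=
  Finsupp.mapRange Int.toNat Int.toNat_zero u

/-- Negative part `u⁻` of an integer vector, as an exponent vector. -/
noncomputable def natNegPart (u : Pt →₀ ℤ) : Pt →₀ ℕ := natPosPart (-u)

/-- The binomial `x^{u⁺} - x^{u⁻}` attached to an integer vector `u`. -/
noncomputable def latticeBinomial (K : Type*) [Field K] (u : Pt →₀ ℤ) :
    MvPolynomial Pt K :=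
  monomial (natPosPart u) 1 - monomial (natNegPart u) 1

/-- The lattice ideal `I_Λ` of the lattice attached to `P`. -/
noncomputable def latticeIdeal (K : Type*) [Field K] (P : Finset Pt) :
    Ideal (MvPolynomial Pt K) :=
  Ideal.span {f | ∃ u ∈ latticeOf P, f = latticeBinomial K u}

/-- A thin cycle: a thin polyomino whose cells can be arranged in a cyclic
path `C₁, …, Cₙ` of pairwise distinct edge-adjacent cells (with `C₁` and `Cₙ`
sharing an edge), cells at cyclic distance at least `3` being disjoint. -/
def IsThinCycle (P : Finset Pt) : Prop :=
  IsPolyomino P ∧ IsThin P ∧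
    ∃ n : ℕ, 0 < n ∧ ∃ c : ZMod n → Pt,
      Function.Injective c ∧ (∀ i, c i ∈ P) ∧ (∀ p ∈ P, ∃ i, c i = p) ∧
      (∀ i, CellAdj (c i) (c (i + 1))) ∧
      (∀ i j : ZMod n, j ≠ i → j ≠ i + 1 → j ≠ i + 2 → j ≠ i - 1 → j ≠ i - 2 →
        cellVerts (c i) ∩ cellVerts (c j) = ∅)

/-- A grid polyomino (Definition 4.8 of the paper). -/
def IsGridPolyomino (P : Finset Pt) : Prop :=
  IsPolyomino P ∧
    ∃ (m n r s : ℕ) (a b : ℕ → ℕ → Pt),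
      (∀ i ∈ Finset.Icc 1 r, ∀ j ∈ Finset.Icc 1 s,
        1 < (a i j).1 ∧ (a i j).1 < (b i j).1 ∧ (b i j).1 < m ∧
        1 < (a i j).2 ∧ (a i j).2 < (b i j).2 ∧ (b i j).2 < n) ∧
      (∀ i ∈ Finset.Icc 1 r, ∀ l ∈ Finset.Icc 1 s, ∀ k ∈ Finset.Icc 1 s,
        (a i l).1 = (a i k).1 ∧ (b i l).1 = (b i k).1) ∧
      (∀ j ∈ Finset.Icc 1 s, ∀ l ∈ Finset.Icc 1 r, ∀ k ∈ Finset.Icc 1 r,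
        (a l j).2 = (a k j).2 ∧ (b l j).2 = (b k j).2) ∧
      (∀ i ∈ Finset.Icc 1 (r - 1), ∀ j ∈ Finset.Icc 1 (s - 1),
        (a (i + 1) j).1 = (b i j).1 + 1 ∧ (a i (j + 1)).2 = (b i j).2 + 1) ∧
      P = Finset.Icc ((1, 1) : Pt) (m - 1, n - 1) \
            ((Finset.Icc 1 r ×ˢ Finset.Icc 1 s).biUnion fun ij =>
              Finset.Icc (a ij.1 ij.2)
                ((b ij.1 ij.2).1 - 1, (b ij.1 ij.2).2 - 1))

/-- The cell with lower left corner `c` is properly contained in the interval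
`[a, b]`. -/
def CellProperlyInInterval (a b c : Pt) : Prop :=
  a.1 ≤ c.1 ∧ a.2 ≤ c.2 ∧ c.1 + 1 ≤ b.1 ∧ c.2 + 1 ≤ b.2 ∧
    ¬(a = c ∧ b = (c.1 + 1, c.2 + 1))

/-- The cell `c` is properly contained in exactly one maximal inner interval
of `P` (membership in the set `P₁` of Definition 4.10). -/
def InExactlyOneMaxInterval (P : Finset Pt) (c : Pt) : Prop :=
  ∃! ab : Pt × Pt, IsMaxInnerInterval P ab.1 ab.2 ∧
    CellProperlyInInterval ab.1 ab.2 c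

/-- `P'` is a subgrid polyomino of the grid polyomino `P`: it is a polyomino
obtained from `P` by deleting cells each of which is properly contained in
exactly one maximal inner interval of `P`. -/
def IsSubgridOf (P' P : Finset Pt) : Prop :=
  IsGridPolyomino P ∧ P' ⊆ P ∧
    (∀ c ∈ P, c ∉ P' → InExactlyOneMaxInterval P c) ∧ IsPolyomino P'


section Aux

noncomputable def iotaZ : (Pt →₀ ℕ) →+ (Pt →₀ ℤ) :=
  Finsupp.mapRange.addMonoidHom (Nat.castAddMonoidHom ℤ)

lemma iotaZ_apply (m : Pt →₀ ℕ) (x : Pt) : iotaZ m x = (m x : ℤ) := rfl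

lemma natPosPart_apply (u : Pt →₀ ℤ) (x : Pt) : natPosPart u x = (u x).toNat := rfl

lemma natNegPart_apply (u : Pt →₀ ℤ) (x : Pt) : natNegPart u x = (-u x).toNat := rfl

abbrev QQ (P : Finset Pt) : Type := (Pt →₀ ℤ) ⧸ latticeOf P

noncomputable def gQ (P : Finset Pt) : (Pt →₀ ℕ) →+ QQ P :=
  (QuotientAddGroup.mk' (latticeOf P)).comp iotaZ

noncomputable def phi (K : Type*) [Field K] (P : Finset Pt) :
    MvPolynomial Pt K →ₐ[K] AddMonoidAlgebra K (QQ P) :=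
  aeval fun v => AddMonoidAlgebra.single (gQ P (Finsupp.single v 1)) 1

lemma phi_monomial (K : Type*) [Field K] (P : Finset Pt) (m : Pt →₀ ℕ) (c : K) :
    phi K P (monomial m c) = AddMonoidAlgebra.single (gQ P m) c := by
  induction m using Finsupp.induction with
  | zero =>
    rw [monomial_zero']
    simp only [phi, aeval_C, map_zero]
    rw [show (algebraMap K (AddMonoidAlgebra K (QQ P))) c = AddMonoidAlgebra.single 0 c by
      rw [AddMonoidAlgebra.coe_algebraMap]; simp]
  | single_add v e s hvs he ih =>
    rw [monomial_single_add, map_mul, map_pow]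
    simp only [phi, aeval_X] at *
    rw [ih, AddMonoidAlgebra.single_pow, AddMonoidAlgebra.single_mul_single,
      one_pow, one_mul, map_add]
    congr 1
    have : Finsupp.single v e = e • Finsupp.single v 1 := by
      rw [Finsupp.smul_single, smul_eq_mul, mul_one]
    rw [this, map_nsmul]

variable {K : Type*} [Field K] {P : Finset Pt}

lemma iotaZ_pos_sub_neg (u : Pt →₀ ℤ) :
    iotaZ (natPosPart u) - iotaZ (natNegPart u) = u := by
  ext x
  simp only [Finsupp.sub_apply, iotaZ_apply, natPosPart_apply, natNegPart_apply]
  omega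

lemma gQ_eq_iff (m₀ m₁ : Pt →₀ ℕ) :
    gQ P m₀ = gQ P m₁ ↔ iotaZ m₀ - iotaZ m₁ ∈ latticeOf P := by
  simp only [gQ, AddMonoidHom.comp_apply, QuotientAddGroup.mk'_apply]
  exact QuotientAddGroup.eq_iff_sub_mem

lemma bin_mem_latticeIdeal {u : Pt →₀ ℤ} (hu : u ∈ latticeOf P) :
    latticeBinomial K u ∈ latticeIdeal K P :=
  Ideal.subset_span ⟨u, hu, rfl⟩

lemma monomial_sub_mem {m₀ m₁ : Pt →₀ ℕ}
    (h : iotaZ m₀ - iotaZ m₁ ∈ latticeOf P) :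
    (monomial m₀ 1 - monomial m₁ 1 : MvPolynomial Pt K) ∈ latticeIdeal K P := by
  set u : Pt →₀ ℤ := iotaZ m₀ - iotaZ m₁ with hu
  have h1 : m₀ - natPosPart u + natPosPart u = m₀ := by
    ext x
    simp only [Finsupp.add_apply, Finsupp.tsub_apply, natPosPart_apply, hu,
      Finsupp.sub_apply, iotaZ_apply]
    omega
  have h2 : m₀ - natPosPart u + natNegPart u = m₁ := by
    ext x
    simp only [Finsupp.add_apply, Finsupp.tsub_apply, natPosPart_apply,
      natNegPart_apply, hu, Finsupp.sub_apply, iotaZ_apply, Finsupp.neg_apply]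
    omega
  have key : (monomial (m₀ - natPosPart u) 1 : MvPolynomial Pt K) *
      latticeBinomial K u = monomial m₀ 1 - monomial m₁ 1 := by
    rw [latticeBinomial, mul_sub, monomial_mul, monomial_mul, one_mul, h1, h2]
  rw [← key]
  exact Ideal.mul_mem_left _ _ (bin_mem_latticeIdeal h)

lemma phi_bin {u : Pt →₀ ℤ} (hu : u ∈ latticeOf P) :
    phi K P (latticeBinomial K u) = 0 := by
  rw [latticeBinomial, map_sub, phi_monomial, phi_monomial,
    (gQ_eq_iff _ _).2 (by rw [iotaZ_pos_sub_neg]; exact hu), sub_self]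

lemma latticeIdeal_le_ker {f : MvPolynomial Pt K} (hf : f ∈ latticeIdeal K P) :
    phi K P f = 0 := by
  have hle : latticeIdeal K P ≤ RingHom.ker (phi K P).toRingHom := by
    rw [latticeIdeal]
    refine Ideal.span_le.2 ?_
    rintro f ⟨u, hu, rfl⟩
    exact phi_bin hu
  exact hle hf

lemma exists_other {ι Q' : Type*} (s : Finset ι) (q : ι → Q') (c : ι → K)
    (h : (∑ m ∈ s, Finsupp.single (q m) (c m) : Q' →₀ K) = 0)
    {m₀ : ι} (hm₀ : m₀ ∈ s) (hc : c m₀ ≠ 0) :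
    ∃ m₁ ∈ s, m₁ ≠ m₀ ∧ q m₁ = q m₀ := by
  classical
  by_contra hcon
  push_neg at hcon
  have h2 := congrArg (fun f : Q' →₀ K => f (q m₀)) h
  simp only [Finsupp.finset_sum_apply, Finsupp.single_apply, Finsupp.coe_zero,
    Pi.zero_apply] at h2
  rw [Finset.sum_eq_single m₀] at h2
  · simp only [if_pos rfl] at h2; exact hc h2
  · intro b hb hne
    rw [if_neg]
    intro hqb
    exact absurd hqb (hcon b hb hne)
  · intro hh; exact absurd hm₀ hh

lemma ker_le_latticeIdeal (f : MvPolynomial Pt K) (hf : phi K P f = 0) :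
    f ∈ latticeIdeal K P := by
  generalize hn : f.support.card = n
  induction n using Nat.strong_induction_on generalizing f with
  | _ n ih =>
    by_cases h0 : f = 0
    · rw [h0]; exact Submodule.zero_mem _
    · obtain ⟨m₀, hm₀⟩ := Finset.nonempty_iff_ne_empty.2
        (fun he => h0 (support_eq_empty.1 he))
      have hsum : (∑ m ∈ f.support,
          Finsupp.single (gQ P m) (coeff m f) : QQ P →₀ K) = 0 := by
        have heq : phi K P f = ∑ m ∈ f.support,
            AddMonoidAlgebra.single (gQ P m) (coeff m f) := by
          conv_lhs => rw [f.as_sum, map_sum]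
          exact Finset.sum_congr rfl fun m _ => phi_monomial K P m _
        rw [heq] at hf
        exact AddMonoidAlgebra.ofCoeff_eq_zero.1
          (by rw [AddMonoidAlgebra.ofCoeff_sum]; exact hf)
      obtain ⟨m₁, hm₁s, hm₁ne, hm₁q⟩ :=
        exists_other f.support (gQ P) (fun m => coeff m f) hsum hm₀
          (mem_support_iff.1 hm₀)
      have hbin : (monomial m₀ 1 - monomial m₁ 1 : MvPolynomial Pt K) ∈
          latticeIdeal K P :=
        monomial_sub_mem ((gQ_eq_iff _ _).1 hm₁q.symm)
      set g : MvPolynomial Pt K :=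
        f - C (coeff m₀ f) * (monomial m₀ 1 - monomial m₁ 1) with hg
      have hcoeff : ∀ m, coeff m g = coeff m f -
          coeff m₀ f * ((if m₀ = m then 1 else 0) - (if m₁ = m then 1 else 0)) := by
        intro m
        simp [hg, coeff_sub, coeff_C_mul, coeff_monomial, mul_sub]
      have hgsupp : g.support ⊆ f.support.erase m₀ := by
        intro m hm
        have hmg := mem_support_iff.1 hm
        rw [Finset.mem_erase]
        constructor
        · rintro rfl
          apply hmg
          rw [hcoeff, if_pos rfl, if_neg hm₁ne]
          ring
        · by_cases hmm : m₁ = m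
          · exact hmm ▸ hm₁s
          · by_cases h' : m₀ = m
            · exact h' ▸ hm₀
            · rw [mem_support_iff]
              intro hz
              apply hmg
              rw [hcoeff, hz, if_neg hmm, if_neg h']
              ring
      have hcard : g.support.card < n := by
        calc g.support.card ≤ (f.support.erase m₀).card := Finset.card_le_card hgsupp
          _ < f.support.card := Finset.card_erase_lt_of_mem hm₀
          _ = n := hn
      have hphig : phi K P g = 0 := by
        rw [hg, map_sub, hf, map_mul, latticeIdeal_le_ker hbin, mul_zero, sub_zero]
      have hgmem : g ∈ latticeIdeal K P := ih _ hcard g hphig rfl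
      have hfeq : f = g + C (coeff m₀ f) * (monomial m₀ 1 - monomial m₁ 1) := by
        rw [hg]; ring
      rw [hfeq]
      exact Submodule.add_mem _ hgmem (Ideal.mul_mem_left _ _ hbin)

/-! ### Geometry: inner minors are lattice binomials -/

lemma telescope {M : Type*} [AddCommGroup M] (G : ℕ → M) {a b : ℕ} (h : a ≤ b) :
    ∑ j ∈ Finset.Ico a b, (G j - G (j + 1)) = G a - G b := by
  rw [Finset.sum_Ico_eq_sum_range]
  have h2 := Finset.sum_range_sub' (fun k => G (a + k)) (b - a)
  simp only [Nat.add_zero, ← Nat.add_assoc] at h2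
  rw [h2, Nat.add_sub_cancel' h]

noncomputable def wvec (a b : Pt) : Pt →₀ ℤ :=
  Finsupp.single a 1 + Finsupp.single b 1
    - Finsupp.single (a.1, b.2) 1 - Finsupp.single (b.1, a.2) 1

lemma sum_cellVec (a b : Pt) (h1 : a.1 ≤ b.1) (h2 : a.2 ≤ b.2) :
    ∑ i ∈ Finset.Ico a.1 b.1, ∑ j ∈ Finset.Ico a.2 b.2, cellVec (i, j)
      = wvec a b := by
  have inner : ∀ i, ∑ j ∈ Finset.Ico a.2 b.2, cellVec (i, j)
      = (Finsupp.single (i, a.2) 1 - Finsupp.single (i + 1, a.2) 1)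
        - (Finsupp.single (i, b.2) 1 - Finsupp.single (i + 1, b.2) 1) := by
    intro i
    have ht := telescope
      (fun j => (Finsupp.single (i, j) (1:ℤ) - Finsupp.single (i + 1, j) 1)) h2
    rw [← ht]
    refine Finset.sum_congr rfl fun j _ => ?_
    simp only [cellVec]
    abel
  simp only [inner]
  have ht := telescope
    (fun i => (Finsupp.single (i, a.2) (1:ℤ) - Finsupp.single (i, b.2) 1)) h1
  rw [Finset.sum_congr rfl (fun i _ => show
        (Finsupp.single (i, a.2) (1:ℤ) - Finsupp.single (i + 1, a.2) 1)
          - (Finsupp.single (i, b.2) 1 - Finsupp.single (i + 1, b.2) 1)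
      = (Finsupp.single (i, a.2) (1:ℤ) - Finsupp.single (i, b.2) 1)
        - (Finsupp.single (i + 1, a.2) 1 - Finsupp.single (i + 1, b.2) 1)
      from by abel), ht, wvec]
  abel

lemma wvec_mem {a b : Pt} (h : IsInnerInterval P a b) :
    wvec a b ∈ latticeOf P := by
  obtain ⟨h1, h2, hcells⟩ := h
  rw [← sum_cellVec a b h1.le h2.le]
  refine AddSubgroup.sum_mem _ fun i hi => AddSubgroup.sum_mem _ fun j hj => ?_
  rw [Finset.mem_Ico] at hi hj
  exact AddSubgroup.subset_closure
    ⟨(i, j), hcells (i, j) hi.1 hi.2 hj.1 hj.2, rfl⟩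

lemma natPosPart_wvec {a b : Pt} (h1 : a.1 < b.1) (h2 : a.2 < b.2) :
    natPosPart (wvec a b) = Finsupp.single a 1 + Finsupp.single b 1 := by
  obtain ⟨a1, a2⟩ := a; obtain ⟨b1, b2⟩ := b
  ext ⟨x1, x2⟩
  simp only [natPosPart_apply, wvec, Finsupp.add_apply, Finsupp.sub_apply,
    Finsupp.single_apply, Prod.mk.injEq] at *
  split_ifs <;> omega

lemma natNegPart_wvec {a b : Pt} (h1 : a.1 < b.1) (h2 : a.2 < b.2) :
    natNegPart (wvec a b)
      = Finsupp.single (a.1, b.2) 1 + Finsupp.single (b.1, a.2) 1 := by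
  obtain ⟨a1, a2⟩ := a; obtain ⟨b1, b2⟩ := b
  ext ⟨x1, x2⟩
  simp only [natNegPart_apply, wvec, Finsupp.neg_apply, Finsupp.add_apply,
    Finsupp.sub_apply, Finsupp.single_apply, Prod.mk.injEq] at *
  split_ifs <;> omega

lemma innerMinor_eq_bin (K : Type*) [Field K] {a b : Pt}
    (h1 : a.1 < b.1) (h2 : a.2 < b.2) :
    innerMinor K a b = latticeBinomial K (wvec a b) := by
  rw [innerMinor, latticeBinomial, natPosPart_wvec h1 h2, natNegPart_wvec h1 h2]
  rw [X, X, X, X, monomial_mul, monomial_mul, one_mul]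


lemma cellVec_eq_wvec (c : Pt) : cellVec c = wvec c (c.1 + 1, c.2 + 1) := by
  rw [cellVec, wvec]
  abel

lemma cell_innerInterval {c : Pt} (hc : c ∈ P) :
    IsInnerInterval P c (c.1 + 1, c.2 + 1) := by
  refine ⟨Nat.lt_succ_self _, Nat.lt_succ_self _, fun e h1 h2 h3 h4 => ?_⟩
  have : e = c := Prod.ext (by omega) (by omega)
  rwa [this]

lemma bin_cellVec_mem_poly {c : Pt} (hc : c ∈ P) :
    latticeBinomial K (cellVec c) ∈ polyIdeal K P := by
  rw [cellVec_eq_wvec, ← innerMinor_eq_bin K (Nat.lt_succ_self _) (Nat.lt_succ_self _)]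
  refine Ideal.subset_span ?_
  rw [innerMinors]
  exact ⟨c, _, cell_innerInterval hc, rfl⟩

lemma bin_zero : latticeBinomial K (0 : Pt →₀ ℤ) = 0 := by
  have : natPosPart (0 : Pt →₀ ℤ) = 0 := by ext x; simp [natPosPart_apply]
  have h2 : natNegPart (0 : Pt →₀ ℤ) = 0 := by ext x; simp [natNegPart_apply]
  rw [latticeBinomial, this, h2, sub_self]

lemma bin_neg (u : Pt →₀ ℤ) : latticeBinomial K (-u) = - latticeBinomial K u := by
  have h1 : natPosPart (-u) = natNegPart u := rfl
  have h2 : natNegPart (-u) = natPosPart u := by rw [natNegPart, neg_neg]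
  rw [latticeBinomial, latticeBinomial, h1, h2, neg_sub]

lemma exists_monomial_mul_bin_mem {u : Pt →₀ ℤ} (hu : u ∈ latticeOf P) :
    ∃ m : Pt →₀ ℕ,
      (monomial m (1:K)) * latticeBinomial K u ∈ polyIdeal K P := by
  induction hu using AddSubgroup.closure_induction with
  | mem x hx =>
    obtain ⟨c, hc, rfl⟩ := hx
    exact ⟨0, by rw [monomial_zero', C_1, one_mul]; exact bin_cellVec_mem_poly hc⟩
  | zero => exact ⟨0, by rw [bin_zero, mul_zero]; exact Submodule.zero_mem _⟩
  | add u v hu hv ihu ihv =>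
    obtain ⟨mu, hmu⟩ := ihu
    obtain ⟨mv, hmv⟩ := ihv
    set d : Pt →₀ ℕ := natPosPart u + natPosPart v - natPosPart (u + v) with hd
    have hA : d + natPosPart (u + v) = natPosPart u + natPosPart v := by
      ext x
      simp only [hd, Finsupp.add_apply, Finsupp.tsub_apply, natPosPart_apply]
      omega
    have hB : d + natNegPart (u + v) = natNegPart u + natNegPart v := by
      ext x
      simp only [hd, Finsupp.add_apply, Finsupp.tsub_apply, natPosPart_apply,
        natNegPart_apply, Finsupp.neg_apply]
      omega
    refine ⟨mu + mv + d, ?_⟩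
    have key : (monomial (mu + mv + d) (1:K)) * latticeBinomial K (u + v)
        = monomial (mv + natPosPart v) 1 * (monomial mu 1 * latticeBinomial K u)
          + monomial (mu + natNegPart u) 1
            * (monomial mv 1 * latticeBinomial K v) := by
      simp only [latticeBinomial, mul_sub, monomial_mul, mul_one, one_mul]
      rw [show mu + mv + d + natPosPart (u + v)
            = mv + natPosPart v + (mu + natPosPart u) from by
          rw [add_assoc, hA]; ext x; simp [Finsupp.add_apply]; omega,
        show mu + mv + d + natNegPart (u + v)
            = mu + natNegPart u + (mv + natNegPart v) from by
          rw [add_assoc, hB]; ext x; simp [Finsupp.add_apply]; omega,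
        show mu + natNegPart u + (mv + natPosPart v)
            = mv + natPosPart v + (mu + natNegPart u) from by
          ext x; simp [Finsupp.add_apply]; omega]
      ring
    rw [key]
    exact Submodule.add_mem _ (Ideal.mul_mem_left _ _ hmu)
      (Ideal.mul_mem_left _ _ hmv)
  | neg u hu ihu =>
    obtain ⟨m, hm⟩ := ihu
    refine ⟨m, ?_⟩
    rw [bin_neg, mul_neg]
    exact Submodule.neg_mem _ hm

lemma polyIdeal_le_latticeIdeal : polyIdeal K P ≤ latticeIdeal K P := by
  rw [polyIdeal, innerMinors]
  refine Ideal.span_le.2 ?_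
  rintro f ⟨a, b, hab, rfl⟩
  rw [innerMinor_eq_bin K hab.1 hab.2.1]
  exact bin_mem_latticeIdeal (wvec_mem hab)


/-! ### Finite generation of the lattice ideal -/

lemma lattice_support_subset {u : Pt →₀ ℤ} (hu : u ∈ latticeOf P) :
    ∀ x : Pt, x ∉ vertexSet P → u x = 0 := by
  induction hu using AddSubgroup.closure_induction with
  | mem v hv =>
    obtain ⟨c, hc, rfl⟩ := hv
    obtain ⟨c1, c2⟩ := c
    intro x hx
    obtain ⟨x1, x2⟩ := x
    have hx' : (x1, x2) ∉ cellVerts (c1, c2) := fun hxc =>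
      hx (Finset.mem_biUnion.2 ⟨(c1, c2), hc, hxc⟩)
    simp only [cellVerts, Finset.mem_insert, Finset.mem_singleton, not_or,
      Prod.mk.injEq] at hx'
    simp only [cellVec, Finsupp.sub_apply, Finsupp.add_apply,
      Finsupp.single_apply, Prod.mk.injEq]
    split_ifs <;> omega
  | zero => intro x _; rfl
  | add u v _ _ ihu ihv =>
    intro x hx
    rw [Finsupp.add_apply, ihu x hx, ihv x hx, add_zero]
  | neg u _ ihu =>
    intro x hx
    rw [Finsupp.neg_apply, ihu x hx, neg_zero]

lemma bin_vars_subset {u : Pt →₀ ℤ} (hu : u ∈ latticeOf P) :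
    ((latticeBinomial K u).vars : Set Pt) ⊆ ↑(vertexSet P) := by
  intro x hx
  have h1 := vars_sub_subset (p := monomial (natPosPart u) (1:K))
    (q := monomial (natNegPart u) 1)
  rw [latticeBinomial] at hx
  have hx2 := h1 hx
  rw [Finset.mem_union] at hx2
  by_contra hxW
  have hz := lattice_support_subset hu x hxW
  rcases hx2 with h | h
  · rw [vars_monomial one_ne_zero, Finsupp.mem_support_iff, natPosPart_apply] at h
    omega
  · rw [vars_monomial one_ne_zero, Finsupp.mem_support_iff, natNegPart_apply] at h
    omega


lemma latticeIdeal_fg : (latticeIdeal K P).FG := by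
  classical
  set W := vertexSet P with hW
  set f : {x // x ∈ W} → Pt := Subtype.val with hf
  set fr : MvPolynomial {x // x ∈ W} K →+* MvPolynomial Pt K :=
    (rename f).toRingHom with hfr
  set B : Set (MvPolynomial Pt K) :=
    {p | ∃ u ∈ latticeOf P, p = latticeBinomial K u} with hB
  have hBsub : B ⊆ Set.range fr := by
    rintro p ⟨u, hu, rfl⟩
    obtain ⟨q, hq⟩ := exists_rename_eq_of_vars_subset_range
      (latticeBinomial K u) f Subtype.val_injective
      (by rw [hf, Subtype.range_val]; exact bin_vars_subset hu)
    exact ⟨q, hq⟩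
  have himg : fr '' (fr ⁻¹' B) = B := Set.image_preimage_eq_of_subset hBsub
  have heq : latticeIdeal K P = Ideal.map fr (Ideal.span (fr ⁻¹' B)) := by
    rw [Ideal.map_span, himg, latticeIdeal]
  rw [heq]
  haveI : IsNoetherianRing (MvPolynomial {x // x ∈ W} K) :=
    MvPolynomial.isNoetherianRing
  exact Ideal.FG.map (IsNoetherian.noetherian _) fr

lemma exists_finite_gen : ∃ T : Finset (MvPolynomial Pt K),
    (↑T : Set _) ⊆ {p | ∃ u ∈ latticeOf P, p = latticeBinomial K u} ∧
      latticeIdeal K P = Ideal.span (↑T : Set _) := by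
  classical
  obtain ⟨F, hF⟩ := latticeIdeal_fg (K := K) (P := P)
  have hmem : ∀ g ∈ F, ∃ T : Finset (MvPolynomial Pt K),
      (↑T : Set _) ⊆ {p | ∃ u ∈ latticeOf P, p = latticeBinomial K u} ∧
        g ∈ Ideal.span (↑T : Set _) := by
    intro g hg
    have : g ∈ latticeIdeal K P := by
      rw [← hF]; exact Ideal.subset_span hg
    rw [latticeIdeal] at this
    exact Submodule.mem_span_finite_of_mem_span this
  choose! t ht1 ht2 using hmem
  refine ⟨F.biUnion t, ?_, ?_⟩
  · intro x hx
    obtain ⟨g, hg, hxg⟩ := Finset.mem_biUnion.1 hx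
    exact ht1 g hg hxg
  · apply le_antisymm
    · rw [← hF]
      refine Ideal.span_le.2 fun g hg => ?_
      exact Ideal.span_mono (Finset.coe_subset.2 (Finset.subset_biUnion_of_mem t hg))
        (ht2 g hg)
    · refine Ideal.span_le.2 fun x hx => ?_
      obtain ⟨g, hg, hxg⟩ := Finset.mem_biUnion.1 hx
      rw [latticeIdeal]
      exact Ideal.subset_span (ht1 g hg hxg)

lemma exists_uniform_monomial : ∃ m₀ : Pt →₀ ℕ,
    ∀ f ∈ latticeIdeal K P, monomial m₀ (1:K) * f ∈ polyIdeal K P := by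
  classical
  obtain ⟨T, hTB, hTspan⟩ := exists_finite_gen (K := K) (P := P)
  have hmon : ∀ g ∈ T, ∃ m : Pt →₀ ℕ,
      monomial m (1:K) * g ∈ polyIdeal K P := by
    intro g hg
    obtain ⟨u, hu, rfl⟩ := hTB hg
    exact exists_monomial_mul_bin_mem hu
  choose! mf hmf using hmon
  refine ⟨∑ g ∈ T, mf g, ?_⟩
  intro p hp
  rw [hTspan] at hp
  refine Submodule.span_induction ?_ ?_ ?_ ?_ hp
  · intro g hg
    have hle : mf g ≤ ∑ g ∈ T, mf g :=
      Finset.single_le_sum (f := fun g => mf g) (fun _ _ => zero_le) hg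
    rw [show (monomial (∑ g ∈ T, mf g) (1:K))
        = monomial ((∑ g ∈ T, mf g) - mf g) 1 * monomial (mf g) 1 from by
      rw [monomial_mul, one_mul, tsub_add_cancel_of_le hle], mul_assoc]
    exact Ideal.mul_mem_left _ _ (hmf g hg)
  · rw [mul_zero]; exact Submodule.zero_mem _
  · intro x y _ _ hx hy
    rw [mul_add]; exact Submodule.add_mem _ hx hy
  · intro r x _ hx
    rw [smul_eq_mul, mul_left_comm]
    exact Ideal.mul_mem_left _ _ hx


lemma isUnit_phi_monomial (m : Pt →₀ ℕ) : IsUnit (phi K P (monomial m (1:K))) := by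
  rw [phi_monomial]
  refine ⟨⟨AddMonoidAlgebra.single (gQ P m) 1,
    AddMonoidAlgebra.single (-(gQ P m)) 1, ?_, ?_⟩, rfl⟩ <;>
  · rw [AddMonoidAlgebra.single_mul_single]
    simp [AddMonoidAlgebra.one_def]

lemma stability {m : Pt →₀ ℕ} {p : MvPolynomial Pt K}
    (h : monomial m (1:K) * p ∈ latticeIdeal K P) : p ∈ latticeIdeal K P := by
  apply ker_le_latticeIdeal
  have h2 := latticeIdeal_le_ker h
  rw [map_mul] at h2
  exact ((isUnit_phi_monomial m).mul_right_eq_zero).1 h2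

end Aux

/-- Lemma 1.1: there is a monomial `u` with `I_Λ = (I_P : u)`. -/
theorem lattice_ideal_is_colon (K : Type*) [Field K] (m n : ℕ) (P : Finset Pt)
    (hbox : ∀ c ∈ P, 1 ≤ c.1 ∧ c.1 + 1 ≤ m ∧ 1 ≤ c.2 ∧ c.2 + 1 ≤ n) :
    ∃ u : Pt →₀ ℕ,
      latticeIdeal K P =
        Submodule.colon (polyIdeal K P)
          (Ideal.span {(monomial u (1 : K) : MvPolynomial Pt K)}) := by
  obtain ⟨m₀, hm₀⟩ := exists_uniform_monomial (K := K) (P := P)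
  refine ⟨m₀, le_antisymm ?_ ?_⟩
  · intro p hp
    rw [Submodule.mem_colon]
    intro q hq
    obtain ⟨c, rfl⟩ := Ideal.mem_span_singleton.1 hq
    rw [smul_eq_mul, show p * (monomial m₀ 1 * c) = c * (monomial m₀ (1:K) * p)
      from by ring]
    exact Ideal.mul_mem_left _ _ (hm₀ p hp)
  · intro p hp
    rw [Submodule.mem_colon] at hp
    have h1 := hp (monomial m₀ 1) (Ideal.subset_span (Set.mem_singleton _))
    rw [smul_eq_mul] at h1
    have h2 : monomial m₀ 1 * p ∈ latticeIdeal K P := by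
      rw [mul_comm]
      exact polyIdeal_le_latticeIdeal h1
    exact stability h2

end PolyominoPaper
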